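/- Suppose r, r', d ∈ (0, 1/10) satisfy the triangle inequalities and additionally d² + r'² > r² (equivalently the flat angle α₀ opposite r is acute). Then the spherical angle α_K (opposite r on the unit sphere) is bounded away from π: 1 + cos α_K ≥ c for an absolute constant c > 0. Specifically, 1 + cos α_K = (cos r − cos(d + r'))/(sin d sin r') = 2 sin((d+r'−r)/2) sin((d+r'+r)/2)/(sin d sin r') ≥ c. -/

import Mathlib

set_option maxHeartbeats 1000000 in
/-- If the sides `r, r', d ∈ (0, 1/10)` satisfy the triangle inequalities and
`d² + r'² > r²` (the flat angle opposite `r` is acute), then the spherical angle `αK`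
opposite `r` on the unit sphere is bounded away from `π`:
`1 + cos αK = (cos r − cos(d+r'))/(sin d sin r')
            = 2 sin((d+r'−r)/2) sin((d+r'+r)/2)/(sin d sin r') ≥ c`
for an absolute constant `c > 0`. -/
theorem stmt9 :
    ∃ c > 0, ∀ r r' d αK : ℝ,
      r ∈ Set.Ioo (0 : ℝ) (1 / 10) → r' ∈ Set.Ioo (0 : ℝ) (1 / 10) →
      d ∈ Set.Ioo (0 : ℝ) (1 / 10) → |d - r'| < r → r < d + r' →
      d ^ 2 + r' ^ 2 > r ^ 2 →
      Real.cos αK = (Real.cos r - Real.cos r' * Real.cos d) / (Real.sin r' * Real.sin d) →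
      1 + Real.cos αK = (Real.cos r - Real.cos (d + r')) / (Real.sin d * Real.sin r') ∧
      1 + Real.cos αK =
        2 * Real.sin ((d + r' - r) / 2) * Real.sin ((d + r' + r) / 2) /
          (Real.sin d * Real.sin r') ∧
      c ≤ 1 + Real.cos αK := by
  refine ⟨1/2, by norm_num, ?_⟩
  rintro r r' d αK ⟨hr0, hr1⟩ ⟨hr'0, hr'1⟩ ⟨hd0, hd1⟩ habs htri hacute hcos
  have hpi := Real.pi_gt_three
  have hsd : 0 < Real.sin d := Real.sin_pos_of_pos_of_lt_pi hd0 (by linarith)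
  have hsr' : 0 < Real.sin r' := Real.sin_pos_of_pos_of_lt_pi hr'0 (by linarith)
  have h1 : 1 + Real.cos αK = (Real.cos r - Real.cos (d + r')) / (Real.sin d * Real.sin r') := by
    rw [hcos, Real.cos_add]
    field_simp
    ring
  have hnum : Real.cos r - Real.cos (d + r') =
      2 * Real.sin ((d + r' - r) / 2) * Real.sin ((d + r' + r) / 2) := by
    rw [Real.cos_sub_cos, show (r - (d + r')) / 2 = -((d + r' - r) / 2) by ring, Real.sin_neg,
      show (r + (d + r')) / 2 = (d + r' + r) / 2 by ring]
    ring
  have h2 : 1 + Real.cos αK =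
      2 * Real.sin ((d + r' - r) / 2) * Real.sin ((d + r' + r) / 2) /
        (Real.sin d * Real.sin r') := by rw [h1, hnum]
  refine ⟨h1, h2, ?_⟩
  -- bounds
  set a := (d + r' - r) / 2 with ha
  set b := (d + r' + r) / 2 with hb
  have ha0 : 0 < a := by rw [ha]; linarith
  have hb0 : 0 < b := by rw [hb]; linarith
  have ha1 : a ≤ 1 := by rw [ha]; linarith
  have hb1 : b ≤ 1 := by rw [hb]; linarith
  have hsa : a - a ^ 3 / 4 < Real.sin a := by have := Real.sin_gt_sub_cube ha0; linarith [pow_pos ha0 3]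
  have hsb : b - b ^ 3 / 4 < Real.sin b := by have := Real.sin_gt_sub_cube hb0; linarith [pow_pos hb0 3]
  have hsa' : a * (99/100) ≤ Real.sin a := by
    have : a ^ 3 / 4 ≤ a * (1/100) := by nlinarith [sq_nonneg a]
    linarith
  have hsb' : b * (99/100) ≤ Real.sin b := by
    have hb15 : b ≤ 3/20 := by rw [hb]; linarith
    have : b ^ 3 / 4 ≤ b * (1/100) := by nlinarith [sq_nonneg b]
    linarith
  have hsdle : Real.sin d ≤ d := le_of_lt (Real.sin_lt hd0)
  have hsr'le : Real.sin r' ≤ r' := le_of_lt (Real.sin_lt hr'0)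
  have h4ab : 4 * (a * b) = d ^ 2 + r' ^ 2 - r ^ 2 + 2 * (d * r') := by
    rw [ha, hb]; ring
  have habp : d * r' ≤ 4 * (a * b) := by linarith [mul_pos hd0 hr'0]
  have hden : 0 < Real.sin d * Real.sin r' := mul_pos hsd hsr'
  rw [h2, le_div_iff₀ hden]
  have hdle : Real.sin d * Real.sin r' ≤ d * r' :=
    mul_le_mul hsdle hsr'le (le_of_lt hsr') (le_of_lt hd0)
  have key : (a * (99/100)) * (b * (99/100)) ≤ Real.sin a * Real.sin b :=
    mul_le_mul hsa' hsb' (by positivity) (le_trans (by positivity) hsa')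
  nlinarith [key, hdle, habp, mul_pos hd0 hr'0, mul_pos ha0 hb0]
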